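/- Let $h:\mathbb{R}^{m\times n}\to\mathbb{R}$ be twice continuously differentiable, $\lambda>0$, and let $(\bar U,\bar V)$ be a second-order stationary point of $F_r(U,V)=h(UV^\top)+\frac{\lambda}{2}(\|U\|_F^2+\|V\|_F^2)$ with $\mathrm{rank}(\bar U) < r$. Then $\|\nabla h(\bar U\bar V^\top)\|_2 \leq \lambda$, i.e., $\bar U\bar V^\top$ is a first-order stationary point of $f(X)=h(X)+\lambda\|X\|_*$. -/

import Mathlib

open Matrix Finset

attribute [local instance] Matrix.frobeniusNormedAddCommGroup Matrix.frobeniusNormedSpace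

def mdot {m n : ℕ} (A B : Matrix (Fin m) (Fin n) ℝ) : ℝ := ∑ i, ∑ j, A i j * B i j

noncomputable def frob {m n : ℕ} (A : Matrix (Fin m) (Fin n) ℝ) : ℝ := Real.sqrt (mdot A A)

def IsOrth {k : ℕ} (R : Matrix (Fin k) (Fin k) ℝ) : Prop := Rᵀ * R = 1

def rdg (a b : ℕ) {c : ℕ} (x : Fin c → ℝ) : Matrix (Fin a) (Fin b) ℝ :=
  Matrix.of fun i j => if h : (i : ℕ) = (j : ℕ) ∧ (i : ℕ) < c then x ⟨i, h.2⟩ else 0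

noncomputable def descSort {k : ℕ} (f : Fin k → ℝ) : Fin k → ℝ := fun i => f (Tuple.sort f i.rev)

noncomputable def sigCol {a r : ℕ} (X : Matrix (Fin a) (Fin r) ℝ) : Fin r → ℝ :=
  descSort fun i => Real.sqrt ((show (Xᵀ * X).IsHermitian by
    rw [← Matrix.conjTranspose_eq_transpose_of_trivial]; exact Matrix.isHermitian_conjTranspose_mul_self X).eigenvalues i)

noncomputable def sigRow {a b : ℕ} (X : Matrix (Fin a) (Fin b) ℝ) : Fin a → ℝ :=
  descSort fun i => Real.sqrt ((Matrix.isHermitian_mul_conjTranspose_self X).eigenvalues i)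

noncomputable def toDual {m n : ℕ} (G : Matrix (Fin m) (Fin n) ℝ) :
    Matrix (Fin m) (Fin n) ℝ →L[ℝ] ℝ :=
  LinearMap.toContinuousLinearMap
    { toFun := fun Y => mdot G Y
      map_add' := fun Y Z => by
        simp [mdot, Matrix.add_apply, mul_add, Finset.sum_add_distrib]
      map_smul' := fun c Y => by
        simp [mdot, Matrix.smul_apply, smul_eq_mul, Finset.mul_sum, mul_left_comm] }

noncomputable def enorm2 {k : ℕ} (v : Fin k → ℝ) : ℝ := Real.sqrt (∑ i, v i ^ 2)

def subdiff {m n : ℕ} (f : Matrix (Fin m) (Fin n) ℝ → ℝ) (X : Matrix (Fin m) (Fin n) ℝ) :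
    Set (Matrix (Fin m) (Fin n) ℝ) := {G | ∀ Y, f X + mdot G (Y - X) ≤ f Y}

/-! ### Auxiliary lemmas -/

lemma toDual_apply {m n : ℕ} (G Y : Matrix (Fin m) (Fin n) ℝ) : toDual G Y = mdot G Y := rfl

lemma mdot_add_right {m n : ℕ} (A B C : Matrix (Fin m) (Fin n) ℝ) :
    mdot A (B + C) = mdot A B + mdot A C := by
  simp [mdot, Matrix.add_apply, mul_add, Finset.sum_add_distrib]

lemma mdot_smul_right {m n : ℕ} (c : ℝ) (A B : Matrix (Fin m) (Fin n) ℝ) :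
    mdot A (c • B) = c * mdot A B := by
  simp [mdot, Matrix.smul_apply, smul_eq_mul, Finset.mul_sum, mul_left_comm]

lemma mdot_comm {m n : ℕ} (A B : Matrix (Fin m) (Fin n) ℝ) : mdot A B = mdot B A := by
  simp [mdot, mul_comm]

lemma mdot_expand {m n : ℕ} (t : ℝ) (P Q : Matrix (Fin m) (Fin n) ℝ) :
    mdot (P + t • Q) (P + t • Q)
      = mdot P P + 2 * t * mdot P Q + t ^ 2 * mdot Q Q := by
  simp only [mdot, Matrix.add_apply, Matrix.smul_apply, smul_eq_mul, Finset.mul_sum,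
    ← Finset.sum_add_distrib]
  refine Finset.sum_congr rfl fun i _ => Finset.sum_congr rfl fun j _ => by ring

noncomputable def mulT (m n r : ℕ) :
    Matrix (Fin m) (Fin r) ℝ →L[ℝ] Matrix (Fin n) (Fin r) ℝ →L[ℝ] Matrix (Fin m) (Fin n) ℝ :=
  LinearMap.toContinuousLinearMap
  { toFun := fun A => LinearMap.toContinuousLinearMap
      { toFun := fun B => A * Bᵀ
        map_add' := fun B C => by simp [Matrix.transpose_add, Matrix.mul_add]
        map_smul' := fun c B => by simp [Matrix.transpose_smul, Matrix.mul_smul] }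
    map_add' := fun A A' => by
      ext B : 1
      simp [Matrix.add_mul]
    map_smul' := fun c A => by
      ext B : 1
      simp [Matrix.smul_mul] }

noncomputable def mdotL (m n : ℕ) :
    Matrix (Fin m) (Fin n) ℝ →L[ℝ] Matrix (Fin m) (Fin n) ℝ →L[ℝ] ℝ :=
  LinearMap.toContinuousLinearMap
  { toFun := fun A => LinearMap.toContinuousLinearMap
      { toFun := fun B => mdot A B
        map_add' := fun B C => mdot_add_right A B C
        map_smul' := fun c B => by simp [mdot_smul_right] }
    map_add' := fun A A' => by
      ext B : 1
      simp [mdot_comm _ B, mdot_add_right]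
    map_smul' := fun c A => by
      ext B : 1
      simp [mdot_comm _ B, mdot_smul_right] }

lemma contDiff_mulT {N : WithTop ℕ∞} (m n r : ℕ) :
    ContDiff ℝ N (fun p : Matrix (Fin m) (Fin r) ℝ × Matrix (Fin n) (Fin r) ℝ =>
      p.1 * p.2ᵀ) := (mulT m n r).isBoundedBilinearMap.contDiff

lemma contDiff_mdot_diag {N : WithTop ℕ∞} (m n : ℕ) :
    ContDiff ℝ N (fun A : Matrix (Fin m) (Fin n) ℝ => mdot A A) :=
  ((mdotL m n).isBoundedBilinearMap.contDiff).comp (contDiff_id.prodMk contDiff_id)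

lemma hasDerivAt_line {E : Type*} [NormedAddCommGroup E] [NormedSpace ℝ E]
    (x w : E) (t₀ : ℝ) : HasDerivAt (fun t : ℝ => x + t • w) w t₀ := by
  simpa using ((hasDerivAt_id t₀).smul_const w).const_add x

lemma first_deriv_line {E : Type*} [NormedAddCommGroup E] [NormedSpace ℝ E]
    (F : E → ℝ) (x w : E) (hF : DifferentiableAt ℝ F x) (e0 : ℝ)
    (hphi : HasDerivAt (fun s : ℝ => F (x + s • w)) e0 0) :
    fderiv ℝ F x w = e0 := by
  have hF' : HasFDerivAt F (fderiv ℝ F x) (x + (0:ℝ) • w) := by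
    simpa using hF.hasFDerivAt
  have hc : HasDerivAt (fun t : ℝ => F (x + t • w)) (fderiv ℝ F x w) 0 :=
    hF'.comp_hasDerivAt 0 (hasDerivAt_line x w 0)
  exact hc.unique hphi

lemma second_deriv_line {E : Type*} [NormedAddCommGroup E] [NormedSpace ℝ E]
    (F : E → ℝ) (hF : ContDiff ℝ 2 F) (x w : E) (e : ℝ → ℝ) (e' : ℝ)
    (hphi : ∀ t : ℝ, HasDerivAt (fun s : ℝ => F (x + s • w)) (e t) t)
    (he : HasDerivAt e e' 0) :
    fderiv ℝ (fderiv ℝ F) x w w = e' := by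
  have hFd : Differentiable ℝ F := hF.differentiable two_ne_zero
  have hF'c : ContDiff ℝ 1 (fderiv ℝ F) := hF.fderiv_right (by norm_num)
  have hF'd : Differentiable ℝ (fderiv ℝ F) := hF'c.differentiable one_ne_zero
  have h1 : ∀ t : ℝ, fderiv ℝ F (x + t • w) w = e t := by
    intro t
    have hc : HasDerivAt (fun s : ℝ => F (x + s • w)) (fderiv ℝ F (x + t • w) w) t :=
      (hFd (x + t • w)).hasFDerivAt.comp_hasDerivAt t (hasDerivAt_line x w t)
    exact hc.unique (hphi t)
  have hF'' : HasFDerivAt (fderiv ℝ F) (fderiv ℝ (fderiv ℝ F) x) (x + (0:ℝ) • w) := by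
    simpa using (hF'd x).hasFDerivAt
  have hc : HasDerivAt (fun t : ℝ => fderiv ℝ F (x + t • w))
      (fderiv ℝ (fderiv ℝ F) x w) 0 :=
    hF''.comp_hasDerivAt 0 (hasDerivAt_line x w 0)
  have hc2 := hc.clm_apply (hasDerivAt_const 0 w)
  have hg : HasDerivAt (fun t : ℝ => fderiv ℝ F (x + t • w) w)
      (fderiv ℝ (fderiv ℝ F) x w w) 0 := by
    simpa using hc2
  have hg2 : HasDerivAt (fun t : ℝ => fderiv ℝ F (x + t • w) w) e' 0 := by
    rw [funext h1]; exact he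
  exact hg.unique hg2

lemma phi_deriv {m n r : ℕ} (lam : ℝ)
    (h : Matrix (Fin m) (Fin n) ℝ → ℝ)
    (G : Matrix (Fin m) (Fin n) ℝ → Matrix (Fin m) (Fin n) ℝ)
    (hgrad : ∀ X, HasFDerivAt h (toDual (G X)) X)
    (Fr : Matrix (Fin m) (Fin r) ℝ × Matrix (Fin n) (Fin r) ℝ → ℝ)
    (hFr : ∀ p, Fr p = h (p.1 * p.2ᵀ) + lam / 2 * (mdot p.1 p.1 + mdot p.2 p.2))
    (Ub : Matrix (Fin m) (Fin r) ℝ) (Vb : Matrix (Fin n) (Fin r) ℝ)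
    (A : Matrix (Fin m) (Fin r) ℝ) (B : Matrix (Fin n) (Fin r) ℝ) (t₀ : ℝ) :
    HasDerivAt (fun t : ℝ => Fr ((Ub, Vb) + t • (A, B)))
      (mdot (G (Ub*Vbᵀ + t₀ • (A*Vbᵀ + Ub*Bᵀ) + t₀^2 • (A*Bᵀ)))
          ((A*Vbᵀ + Ub*Bᵀ) + (2*t₀) • (A*Bᵀ))
        + (lam * (mdot Ub A + mdot Vb B) + lam * t₀ * (mdot A A + mdot B B))) t₀ := by
  have hexp : ∀ t : ℝ, Fr ((Ub, Vb) + t • (A, B))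
      = h (Ub*Vbᵀ + t • (A*Vbᵀ + Ub*Bᵀ) + t^2 • (A*Bᵀ))
        + (lam/2 * (mdot Ub Ub + mdot Vb Vb) + lam * t * (mdot Ub A + mdot Vb B)
          + lam/2 * t^2 * (mdot A A + mdot B B)) := by
    intro t
    rw [hFr]
    have h1 : ((Ub, Vb) + t • (A, B)).1 = Ub + t • A := rfl
    have h2 : ((Ub, Vb) + t • (A, B)).2 = Vb + t • B := rfl
    rw [h1, h2]
    have hmat : (Ub + t • A) * (Vb + t • B)ᵀ
        = Ub*Vbᵀ + t • (A*Vbᵀ + Ub*Bᵀ) + t^2 • (A*Bᵀ) := by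
      rw [Matrix.transpose_add, Matrix.transpose_smul, Matrix.add_mul, Matrix.mul_add,
        Matrix.mul_add, Matrix.smul_mul, Matrix.mul_smul, Matrix.mul_smul, Matrix.smul_mul]
      module
    rw [hmat, mdot_expand, mdot_expand]
    ring
  have hψ : HasDerivAt (fun t : ℝ => Ub*Vbᵀ + t • (A*Vbᵀ + Ub*Bᵀ) + t^2 • (A*Bᵀ))
      ((A*Vbᵀ + Ub*Bᵀ) + (2*t₀) • (A*Bᵀ)) t₀ := by
    have hp := (hasDerivAt_pow 2 t₀).smul_const (A*Bᵀ)
    have hl := ((hasDerivAt_id t₀).smul_const (A*Vbᵀ + Ub*Bᵀ)).const_add (Ub*Vbᵀ)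
    have := hl.add hp
    exact this.congr_deriv (by simp)
  have hh := (hgrad _).comp_hasDerivAt t₀ hψ
  have hpoly : HasDerivAt (fun t : ℝ => lam/2 * (mdot Ub Ub + mdot Vb Vb)
      + lam * t * (mdot Ub A + mdot Vb B) + lam/2 * t^2 * (mdot A A + mdot B B))
      (lam * (mdot Ub A + mdot Vb B) + lam * t₀ * (mdot A A + mdot B B)) t₀ := by
    have p1 : HasDerivAt (fun t : ℝ => lam * t * (mdot Ub A + mdot Vb B))
        (lam * (mdot Ub A + mdot Vb B)) t₀ := by
      simpa using ((hasDerivAt_id t₀).const_mul lam).mul_const (mdot Ub A + mdot Vb B)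
    have p2 : HasDerivAt (fun t : ℝ => lam/2 * t^2 * (mdot A A + mdot B B))
        (lam * t₀ * (mdot A A + mdot B B)) t₀ := by
      have := ((hasDerivAt_pow 2 t₀).const_mul (lam/2)).mul_const (mdot A A + mdot B B)
      refine this.congr_deriv ?_
      rw [show (2:ℕ) - 1 = 1 from rfl, pow_one]
      push_cast
      ring
    exact (((hasDerivAt_const t₀ (lam/2 * (mdot Ub Ub + mdot Vb Vb))).add p1).add p2).congr_deriv (by simp)
  have hsum := hh.add hpoly
  rw [funext hexp]
  exact hsum

theorem rank_deficient_soc_implies_stationary (m n r : ℕ) (hmn : m ≤ n)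
    (lam : ℝ) (hlam : 0 < lam)
    (h : Matrix (Fin m) (Fin n) ℝ → ℝ)
    (G : Matrix (Fin m) (Fin n) ℝ → Matrix (Fin m) (Fin n) ℝ)
    (hC2 : ContDiff ℝ 2 h)
    (hgrad : ∀ X, HasFDerivAt h (toDual (G X)) X)
    (Fr : Matrix (Fin m) (Fin r) ℝ × Matrix (Fin n) (Fin r) ℝ → ℝ)
    (hFr : ∀ p, Fr p = h (p.1 * p.2ᵀ) + lam / 2 * (mdot p.1 p.1 + mdot p.2 p.2))
    (Ub : Matrix (Fin m) (Fin r) ℝ) (Vb : Matrix (Fin n) (Fin r) ℝ)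
    (hfo : fderiv ℝ Fr (Ub, Vb) = 0)
    (hso : ∀ w, 0 ≤ fderiv ℝ (fderiv ℝ Fr) (Ub, Vb) w w)
    (hrank : Ub.rank < r) :
    ∀ v : Fin n → ℝ, enorm2 ((G (Ub * Vbᵀ)).mulVec v) ≤ lam * enorm2 v := by
  intro v
  -- smoothness of Fr
  have hFrC : ContDiff ℝ 2 Fr := by
    have hfe : Fr = fun p : Matrix (Fin m) (Fin r) ℝ × Matrix (Fin n) (Fin r) ℝ =>
        h (p.1 * p.2ᵀ) + lam / 2 * (mdot p.1 p.1 + mdot p.2 p.2) := funext hFr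
    rw [hfe]
    exact (hC2.comp (contDiff_mulT m n r)).add
      (contDiff_const.mul (((contDiff_mdot_diag m r).comp contDiff_fst).add
        ((contDiff_mdot_diag n r).comp contDiff_snd)))
  have hFrd : Differentiable ℝ Fr := hFrC.differentiable two_ne_zero
  -- first-order consequence
  have hfo' : ∀ (A : Matrix (Fin m) (Fin r) ℝ) (B : Matrix (Fin n) (Fin r) ℝ),
      mdot (G (Ub * Vbᵀ)) (A*Vbᵀ + Ub*Bᵀ) + lam * (mdot Ub A + mdot Vb B) = 0 := by
    intro A B
    have hd := phi_deriv lam h G hgrad Fr hFr Ub Vb A B 0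
    norm_num at hd
    have h1 := first_deriv_line Fr (Ub, Vb) (A, B) (hFrd _) _ hd
    erw [hfo] at h1
    exact h1.symm
  -- kernel vector of Ub
  obtain ⟨z, hzne, hUz⟩ : ∃ z : Fin r → ℝ, z ≠ 0 ∧ Ub *ᵥ z = 0 := by
    have h1 := LinearMap.finrank_range_add_finrank_ker (Matrix.mulVecLin Ub)
    have h2 : Module.finrank ℝ (Fin r → ℝ) = r := Module.finrank_fin_fun ℝ
    have h3 : Ub.rank = Module.finrank ℝ (LinearMap.range (Matrix.mulVecLin Ub)) := rfl
    have h4 : 0 < Module.finrank ℝ (LinearMap.ker (Matrix.mulVecLin Ub)) := by omega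
    obtain ⟨z, hz⟩ := Module.finrank_pos_iff_exists_ne_zero.mp h4
    refine ⟨z.1, fun hc => hz (Subtype.ext hc), ?_⟩
    have h5 := LinearMap.mem_ker.mp z.2
    rwa [Matrix.mulVecLin_apply] at h5
  have hUz' : ∀ i, ∑ k, Ub i k * z k = 0 := fun i => by
    have := congrFun hUz i
    simpa [Matrix.mulVec, dotProduct] using this
  -- Vb z = 0
  have hVz : ∀ j, ∑ k, Vb j k * z k = 0 := by
    have h0 := hfo' 0 (vecMulVec (Vb *ᵥ z) z)
    have hUB : Ub * (vecMulVec (Vb *ᵥ z) z)ᵀ = 0 := by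
      ext i j
      simp only [Matrix.mul_apply, Matrix.transpose_apply, Matrix.vecMulVec_apply,
        Matrix.zero_apply]
      calc ∑ k, Ub i k * ((Vb *ᵥ z) j * z k) = (Vb *ᵥ z) j * ∑ k, Ub i k * z k := by
            rw [Finset.mul_sum]; exact Finset.sum_congr rfl fun k _ => by ring
        _ = 0 := by rw [hUz' i, mul_zero]
    rw [Matrix.zero_mul, zero_add, hUB] at h0
    have hmz : mdot (G (Ub * Vbᵀ)) (0 : Matrix (Fin m) (Fin n) ℝ) = 0 := by simp [mdot]
    have hmz2 : mdot Ub (0 : Matrix (Fin m) (Fin r) ℝ) = 0 := by simp [mdot]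
    have hVv : mdot Vb (vecMulVec (Vb *ᵥ z) z) = ∑ j, (Vb *ᵥ z) j ^ 2 := by
      simp only [mdot, Matrix.vecMulVec_apply]
      refine Finset.sum_congr rfl fun j _ => ?_
      calc ∑ k, Vb j k * ((Vb *ᵥ z) j * z k) = (Vb *ᵥ z) j * ∑ k, Vb j k * z k := by
            rw [Finset.mul_sum]; exact Finset.sum_congr rfl fun k _ => by ring
        _ = (Vb *ᵥ z) j ^ 2 := by
            rw [show (Vb *ᵥ z) j = ∑ k, Vb j k * z k from by
              simp [Matrix.mulVec, dotProduct]]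
            ring
    rw [hmz, hmz2, hVv, zero_add, zero_add] at h0
    have hsum0 : ∑ j, (Vb *ᵥ z) j ^ 2 = 0 := by
      have := mul_eq_zero.mp h0
      rcases this with hc | hc
      · exact absurd hc hlam.ne'
      · exact hc
    intro j
    have hj : (Vb *ᵥ z) j ^ 2 = 0 := by
      have hnn : ∀ i ∈ Finset.univ, (0:ℝ) ≤ (Vb *ᵥ z) i ^ 2 := fun i _ => sq_nonneg _
      exact (Finset.sum_eq_zero_iff_of_nonneg hnn).mp hsum0 j (Finset.mem_univ j)
    have := pow_eq_zero_iff (n := 2) (by norm_num) |>.mp hj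
    simpa [Matrix.mulVec, dotProduct] using this
  -- positivity of Z
  have hZ : 0 < ∑ k, z k ^ 2 := by
    obtain ⟨k, hk⟩ : ∃ k, z k ≠ 0 := by
      by_contra hc; push_neg at hc; exact hzne (funext hc)
    have h5 : 0 < z k ^ 2 := by positivity
    exact lt_of_lt_of_le h5 (Finset.single_le_sum (fun i _ => sq_nonneg (z i)) (mem_univ k))
  -- second-order consequence
  have hso' : ∀ (u : Fin m → ℝ) (v' : Fin n → ℝ),
      0 ≤ 2 * ((∑ k, z k ^ 2) * ∑ i, u i * ((G (Ub * Vbᵀ)) *ᵥ v') i)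
        + lam * ((∑ k, z k ^ 2) * ∑ i, u i ^ 2 + (∑ k, z k ^ 2) * ∑ j, v' j ^ 2) := by
    intro u v'
    have hD : (vecMulVec u z) * Vbᵀ + Ub * (vecMulVec v' z)ᵀ = 0 := by
      ext i j
      simp only [Matrix.add_apply, Matrix.mul_apply, Matrix.transpose_apply,
        Matrix.vecMulVec_apply, Matrix.zero_apply]
      have e1 : ∑ k, u i * z k * Vb j k = u i * ∑ k, Vb j k * z k := by
        rw [Finset.mul_sum]; exact Finset.sum_congr rfl fun k _ => by ring
      have e2 : ∑ k, Ub i k * (v' j * z k) = v' j * ∑ k, Ub i k * z k := by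
        rw [Finset.mul_sum]; exact Finset.sum_congr rfl fun k _ => by ring
      rw [e1, e2, hVz j, hUz' i, mul_zero, mul_zero, add_zero]
    have hC : (vecMulVec u z) * (vecMulVec v' z)ᵀ = (∑ k, z k ^ 2) • vecMulVec u v' := by
      ext i j
      simp only [Matrix.mul_apply, Matrix.transpose_apply, Matrix.vecMulVec_apply,
        Matrix.smul_apply, smul_eq_mul]
      rw [Finset.sum_mul]
      exact Finset.sum_congr rfl fun k _ => by ring
    have hmAA : mdot (vecMulVec u z) (vecMulVec u z) = (∑ k, z k ^ 2) * ∑ i, u i ^ 2 := by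
      simp only [mdot, Matrix.vecMulVec_apply]
      rw [Finset.sum_comm, Finset.sum_mul]
      exact Finset.sum_congr rfl fun k _ => by
        rw [Finset.mul_sum]; exact Finset.sum_congr rfl fun i _ => by ring
    have hmBB : mdot (vecMulVec v' z) (vecMulVec v' z) = (∑ k, z k ^ 2) * ∑ j, v' j ^ 2 := by
      simp only [mdot, Matrix.vecMulVec_apply]
      rw [Finset.sum_comm, Finset.sum_mul]
      exact Finset.sum_congr rfl fun k _ => by
        rw [Finset.mul_sum]; exact Finset.sum_congr rfl fun i _ => by ring
    have hmKC : mdot (G (Ub * Vbᵀ)) ((vecMulVec u z) * (vecMulVec v' z)ᵀ)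
        = (∑ k, z k ^ 2) * ∑ i, u i * ((G (Ub * Vbᵀ)) *ᵥ v') i := by
      rw [hC, mdot_smul_right]
      congr 1
      simp only [mdot, Matrix.vecMulVec_apply, Matrix.mulVec, dotProduct]
      exact Finset.sum_congr rfl fun i _ => by
        rw [Finset.mul_sum]; exact Finset.sum_congr rfl fun j _ => by ring
    -- the derivative of φ along this direction
    have hphi : ∀ t : ℝ, HasDerivAt
        (fun s : ℝ => Fr ((Ub, Vb) + s • (vecMulVec u z, vecMulVec v' z)))
        (2 * t * mdot (G (Ub*Vbᵀ + t^2 • ((vecMulVec u z) * (vecMulVec v' z)ᵀ)))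
            ((vecMulVec u z) * (vecMulVec v' z)ᵀ)
          + (lam * (mdot Ub (vecMulVec u z) + mdot Vb (vecMulVec v' z))
            + lam * t * (mdot (vecMulVec u z) (vecMulVec u z)
              + mdot (vecMulVec v' z) (vecMulVec v' z)))) t := by
      intro t
      have hd := phi_deriv lam h G hgrad Fr hFr Ub Vb (vecMulVec u z) (vecMulVec v' z) t
      rw [hD] at hd
      simpa [mdot_smul_right, mul_assoc] using hd
    have hqd : DifferentiableAt ℝ
        (fun t : ℝ => mdot (G (Ub*Vbᵀ + t^2 • ((vecMulVec u z) * (vecMulVec v' z)ᵀ)))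
          ((vecMulVec u z) * (vecMulVec v' z)ᵀ)) 0 := by
      have hqeq : (fun t : ℝ => mdot (G (Ub*Vbᵀ + t^2 • ((vecMulVec u z) * (vecMulVec v' z)ᵀ)))
            ((vecMulVec u z) * (vecMulVec v' z)ᵀ))
          = fun t : ℝ => (fderiv ℝ h (Ub*Vbᵀ + t^2 • ((vecMulVec u z) * (vecMulVec v' z)ᵀ)))
            ((vecMulVec u z) * (vecMulVec v' z)ᵀ) := by
        funext t
        rw [(hgrad _).fderiv]
        rfl
      rw [hqeq]
      have hψd : DifferentiableAt ℝ
          (fun t : ℝ => Ub*Vbᵀ + t^2 • ((vecMulVec u z) * (vecMulVec v' z)ᵀ)) 0 :=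
        (((hasDerivAt_pow 2 (0:ℝ)).smul_const _).const_add (Ub*Vbᵀ)).differentiableAt
      have hhd := hC2.fderiv_right (m := 1) (by norm_num)
      exact (((hhd.differentiable one_ne_zero) _).comp 0 hψd).clm_apply (differentiableAt_const _)
    have hq0 : (fun t : ℝ => mdot (G (Ub*Vbᵀ + t^2 • ((vecMulVec u z) * (vecMulVec v' z)ᵀ)))
        ((vecMulVec u z) * (vecMulVec v' z)ᵀ)) 0
        = mdot (G (Ub*Vbᵀ)) ((vecMulVec u z) * (vecMulVec v' z)ᵀ) := by norm_num
    have he : HasDerivAt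
        (fun t : ℝ => 2 * t * mdot (G (Ub*Vbᵀ + t^2 • ((vecMulVec u z) * (vecMulVec v' z)ᵀ)))
            ((vecMulVec u z) * (vecMulVec v' z)ᵀ)
          + (lam * (mdot Ub (vecMulVec u z) + mdot Vb (vecMulVec v' z))
            + lam * t * (mdot (vecMulVec u z) (vecMulVec u z)
              + mdot (vecMulVec v' z) (vecMulVec v' z))))
        (2 * mdot (G (Ub*Vbᵀ)) ((vecMulVec u z) * (vecMulVec v' z)ᵀ)
          + lam * (mdot (vecMulVec u z) (vecMulVec u z)
            + mdot (vecMulVec v' z) (vecMulVec v' z))) 0 := by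
      have h1 := (((hasDerivAt_id (0:ℝ)).const_mul 2).mul (hqd.hasDerivAt))
      have h2 : HasDerivAt (fun t : ℝ => lam * (mdot Ub (vecMulVec u z) + mdot Vb (vecMulVec v' z))
          + lam * t * (mdot (vecMulVec u z) (vecMulVec u z)
            + mdot (vecMulVec v' z) (vecMulVec v' z)))
          (lam * (mdot (vecMulVec u z) (vecMulVec u z)
            + mdot (vecMulVec v' z) (vecMulVec v' z))) 0 := by
        have h3 := ((hasDerivAt_id (0:ℝ)).const_mul lam).mul_const
          (mdot (vecMulVec u z) (vecMulVec u z) + mdot (vecMulVec v' z) (vecMulVec v' z))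
        exact ((hasDerivAt_const (0:ℝ) _).add h3).congr_deriv (by simp)
      have h4 := h1.add h2
      have hval : (2 * 1) * ((fun t : ℝ =>
            mdot (G (Ub*Vbᵀ + t^2 • ((vecMulVec u z) * (vecMulVec v' z)ᵀ)))
            ((vecMulVec u z) * (vecMulVec v' z)ᵀ)) 0)
          + (2 * (0:ℝ)) * (deriv (fun t : ℝ =>
            mdot (G (Ub*Vbᵀ + t^2 • ((vecMulVec u z) * (vecMulVec v' z)ᵀ)))
            ((vecMulVec u z) * (vecMulVec v' z)ᵀ)) 0)
          + lam * (mdot (vecMulVec u z) (vecMulVec u z)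
            + mdot (vecMulVec v' z) (vecMulVec v' z))
          = 2 * mdot (G (Ub*Vbᵀ)) ((vecMulVec u z) * (vecMulVec v' z)ᵀ)
            + lam * (mdot (vecMulVec u z) (vecMulVec u z)
              + mdot (vecMulVec v' z) (vecMulVec v' z)) := by
        rw [hq0]; ring
      rw [← hval]
      exact h4
    have hkey := second_deriv_line Fr hFrC (Ub, Vb) (vecMulVec u z, vecMulVec v' z) _ _ hphi he
    have h5 := hso (vecMulVec u z, vecMulVec v' z)
    erw [hkey, hmKC, hmAA, hmBB] at h5
    linarith
  -- conclude with the scaled test vector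
  have hineq := hso' (fun i => -(1/lam) * ((G (Ub * Vbᵀ)) *ᵥ v) i) v
  have e1 : ∑ i, (-(1/lam) * ((G (Ub * Vbᵀ)) *ᵥ v) i) * ((G (Ub * Vbᵀ)) *ᵥ v) i
      = -(1/lam) * ∑ i, ((G (Ub * Vbᵀ)) *ᵥ v) i ^ 2 := by
    rw [Finset.mul_sum]; exact Finset.sum_congr rfl fun i _ => by ring
  have e2 : ∑ i, (-(1/lam) * ((G (Ub * Vbᵀ)) *ᵥ v) i) ^ 2
      = (1/lam)^2 * ∑ i, ((G (Ub * Vbᵀ)) *ᵥ v) i ^ 2 := by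
    rw [Finset.mul_sum]; exact Finset.sum_congr rfl fun i _ => by ring
  rw [e1, e2] at hineq
  have hlam' : lam ≠ 0 := hlam.ne'
  have hrw : 2 * ((∑ k, z k ^ 2) * (-(1/lam) * ∑ i, ((G (Ub * Vbᵀ)) *ᵥ v) i ^ 2))
      + lam * ((∑ k, z k ^ 2) * ((1/lam)^2 * ∑ i, ((G (Ub * Vbᵀ)) *ᵥ v) i ^ 2)
        + (∑ k, z k ^ 2) * ∑ j, v j ^ 2)
      = (∑ k, z k ^ 2) * (lam * ∑ j, v j ^ 2
        - (1/lam) * ∑ i, ((G (Ub * Vbᵀ)) *ᵥ v) i ^ 2) := by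
    field_simp
    ring
  rw [hrw] at hineq
  have h9 : 0 ≤ lam * ∑ j, v j ^ 2 - (1/lam) * ∑ i, ((G (Ub * Vbᵀ)) *ᵥ v) i ^ 2 :=
    nonneg_of_mul_nonneg_right hineq hZ
  have hPQ : ∑ i, ((G (Ub * Vbᵀ)) *ᵥ v) i ^ 2 ≤ lam^2 * ∑ j, v j ^ 2 := by
    have h10 : (1/lam) * ∑ i, ((G (Ub * Vbᵀ)) *ᵥ v) i ^ 2 ≤ lam * ∑ j, v j ^ 2 := by linarith
    have h11 := mul_le_mul_of_nonneg_left h10 hlam.le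
    calc ∑ i, ((G (Ub * Vbᵀ)) *ᵥ v) i ^ 2
        = lam * ((1/lam) * ∑ i, ((G (Ub * Vbᵀ)) *ᵥ v) i ^ 2) := by field_simp
      _ ≤ lam * (lam * ∑ j, v j ^ 2) := h11
      _ = lam^2 * ∑ j, v j ^ 2 := by ring
  have hsq : lam * enorm2 v = Real.sqrt (lam^2 * ∑ j, v j ^ 2) := by
    rw [enorm2, Real.sqrt_mul (sq_nonneg lam), Real.sqrt_sq hlam.le]
  rw [enorm2, hsq]
  exact Real.sqrt_le_sqrt hPQ
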